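/- For any two probability measures μ and ν on ℝ^d and any R > 0, the squared 2-Wasserstein distance satisfies W₂²(μ, ν) ≤ 4R² ‖μ − ν‖_TV + 2 E_{X∼μ}[‖X‖² 1{‖X‖ > R}] + 2R² P_{X∼μ}(‖X‖ > R) + 2 E_{Y∼ν}[‖Y‖² 1{‖Y‖ > R}] + 2R² P_{Y∼ν}(‖Y‖ > R). -/

import Mathlib

open MeasureTheory

/-- Total variation distance between two measures: supremum over measurable sets. -/
noncomputable def tvDist {α : Type*} [MeasurableSpace α] (μ ν : Measure α) : ℝ :=
  ⨆ S : {S : Set α // MeasurableSet S}, |(μ S.1).toReal - (ν S.1).toReal|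

/-- Squared 2-Wasserstein distance: infimum over couplings of the expected squared distance. -/
noncomputable def W2sq {α : Type*} [MeasurableSpace α] [NormedAddCommGroup α]
    (μ ν : Measure α) : ℝ :=
  sInf {c : ℝ | ∃ γ : Measure (α × α), γ.map Prod.fst = μ ∧ γ.map Prod.snd = ν ∧
    c = ∫ p, ‖p.1 - p.2‖ ^ 2 ∂γ}

open Set
open scoped ENNReal NNReal

section Aux

variable {E : Type*} [NormedAddCommGroup E]

lemma tv_nonneg {α : Type*} [MeasurableSpace α] (μ ν : Measure α) : 0 ≤ tvDist μ ν :=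
  Real.iSup_nonneg fun _ => abs_nonneg _

lemma tv_bddAbove {α : Type*} [MeasurableSpace α] (μ ν : Measure α)
    [IsProbabilityMeasure μ] [IsProbabilityMeasure ν] :
    BddAbove (Set.range fun S : {S : Set α // MeasurableSet S} =>
      |(μ S.1).toReal - (ν S.1).toReal|) := by
  refine ⟨1, fun x ⟨S, hS⟩ => ?_⟩
  subst hS
  have h1 : (μ S.1).toReal ≤ 1 := by
    simpa using ENNReal.toReal_mono (by simp) (prob_le_one (μ := μ) (s := S.1))
  have h2 : (ν S.1).toReal ≤ 1 := by
    simpa using ENNReal.toReal_mono (by simp) (prob_le_one (μ := ν) (s := S.1))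
  have h3 : (0:ℝ) ≤ (μ S.1).toReal := ENNReal.toReal_nonneg
  have h4 : (0:ℝ) ≤ (ν S.1).toReal := ENNReal.toReal_nonneg
  rw [abs_sub_le_iff]; constructor <;> linarith

lemma W2sq_le_of_coupling {α : Type*} [MeasurableSpace α] [NormedAddCommGroup α]
    (μ ν : Measure α) (γ : Measure (α × α)) (h1 : γ.map Prod.fst = μ)
    (h2 : γ.map Prod.snd = ν) {b : ℝ} (hb : ∫ p, ‖p.1 - p.2‖ ^ 2 ∂γ ≤ b) :
    W2sq μ ν ≤ b := by
  unfold W2sq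
  refine csInf_le_of_le ⟨0, ?_⟩ ⟨γ, h1, h2, rfl⟩ hb
  rintro c ⟨γ', -, -, rfl⟩
  exact integral_nonneg fun p => by positivity

lemma sq_ofReal_norm (x : E) : ((‖x‖₊ : ℝ≥0∞)) ^ 2 = ENNReal.ofReal (‖x‖ ^ 2) := by
  rw [ENNReal.ofReal_pow (norm_nonneg _), ← ENNReal.ofReal_coe_nnreal, coe_nnnorm]

lemma key1 (x y : E) : ((‖x‖₊ : ℝ≥0∞)) ^ 2 ≤ 2 * (‖x - y‖₊ : ℝ≥0∞) ^ 2 + 2 * (‖y‖₊ : ℝ≥0∞) ^ 2 := by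
  have h : ‖x‖ ≤ ‖x - y‖ + ‖y‖ := by
    calc ‖x‖ = ‖x - y + y‖ := by rw [sub_add_cancel]
    _ ≤ ‖x - y‖ + ‖y‖ := norm_add_le _ _
  have h2 : ‖x‖ ^ 2 ≤ 2 * ‖x - y‖ ^ 2 + 2 * ‖y‖ ^ 2 := by
    nlinarith [norm_nonneg (x - y), norm_nonneg y, norm_nonneg x, sq_nonneg (‖x - y‖ - ‖y‖)]
  rw [sq_ofReal_norm, sq_ofReal_norm, sq_ofReal_norm]
  calc ENNReal.ofReal (‖x‖ ^ 2) ≤ ENNReal.ofReal (2 * ‖x - y‖ ^ 2 + 2 * ‖y‖ ^ 2) :=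
        ENNReal.ofReal_le_ofReal h2
  _ = 2 * ENNReal.ofReal (‖x - y‖ ^ 2) + 2 * ENNReal.ofReal (‖y‖ ^ 2) := by
        rw [ENNReal.ofReal_add (by positivity) (by positivity), ENNReal.ofReal_mul (by norm_num),
          ENNReal.ofReal_mul (by norm_num)]
        norm_num

lemma key2 (x y : E) : ((‖x - y‖₊ : ℝ≥0∞)) ^ 2 ≤ 2 * (‖x‖₊ : ℝ≥0∞) ^ 2 + 2 * (‖y‖₊ : ℝ≥0∞) ^ 2 := by
  have := key1 (x - y) (-y)
  simpa [sub_neg_eq_add, sub_add_cancel, norm_neg] using this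

variable [MeasurableSpace E] [BorelSpace E] [SecondCountableTopology E]

lemma meas_c2 : Measurable fun p : E × E => ((‖p.1 - p.2‖₊ : ℝ≥0∞)) ^ 2 :=
  ((measurable_fst.sub measurable_snd).nnnorm.coe_nnreal_ennreal).pow_const 2

lemma tail_real (μ : Measure E) (s : Set E) :
    ∫ x in s, ‖x‖ ^ 2 ∂μ = (∫⁻ x in s, ((‖x‖₊ : ℝ≥0∞)) ^ 2 ∂μ).toReal := by
  rw [integral_eq_lintegral_of_nonneg_ae (f := fun x => ‖x‖ ^ 2) (ae_of_all _ fun x => by positivity)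
    ((continuous_norm.pow 2).aestronglyMeasurable)]
  congr 1
  exact lintegral_congr fun x => (sq_ofReal_norm x).symm

lemma cost_real (γ : Measure (E × E)) :
    ∫ p, ‖p.1 - p.2‖ ^ 2 ∂γ = (∫⁻ p, ((‖p.1 - p.2‖₊ : ℝ≥0∞)) ^ 2 ∂γ).toReal := by
  rw [integral_eq_lintegral_of_nonneg_ae (f := fun p : E × E => ‖p.1 - p.2‖ ^ 2) (ae_of_all _ fun p => by positivity)
    (((continuous_fst.sub continuous_snd).norm.pow 2).aestronglyMeasurable)]
  congr 1
  exact lintegral_congr fun p => (sq_ofReal_norm _).symm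

lemma cost_top_left (μ ν : Measure E) [IsProbabilityMeasure μ] [IsProbabilityMeasure ν]
    (h : ∫⁻ x, (‖x‖₊ : ℝ≥0∞) ^ 2 ∂μ = ∞) :
    ∫⁻ p, ((‖p.1 - p.2‖₊ : ℝ≥0∞)) ^ 2 ∂(μ.prod ν) = ∞ := by
  rw [lintegral_prod_symm _ meas_c2.aemeasurable]
  have hinner : ∀ y : E, ∫⁻ x, ((‖x - y‖₊ : ℝ≥0∞)) ^ 2 ∂μ = ∞ := by
    intro y
    by_contra hfin
    have hb : ∫⁻ x, ((‖x‖₊ : ℝ≥0∞)) ^ 2 ∂μ ≤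
        ∫⁻ x, (2 * (‖x - y‖₊ : ℝ≥0∞) ^ 2 + 2 * (‖y‖₊ : ℝ≥0∞) ^ 2) ∂μ :=
      lintegral_mono fun x => key1 x y
    rw [lintegral_add_right _ measurable_const, lintegral_const,
      lintegral_const_mul' _ _ (by norm_num)] at hb
    rw [h] at hb
    simp only [measure_univ, mul_one] at hb
    have : (2 : ℝ≥0∞) * ∫⁻ x, ((‖x - y‖₊ : ℝ≥0∞)) ^ 2 ∂μ + 2 * (‖y‖₊ : ℝ≥0∞) ^ 2 ≠ ∞ := by
      apply ENNReal.add_ne_top.2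
      constructor
      · exact ENNReal.mul_ne_top (by norm_num) hfin
      · exact ENNReal.mul_ne_top (by norm_num) (by
          exact ENNReal.pow_ne_top ENNReal.coe_ne_top)
    exact this (top_le_iff.mp hb)
  exact (lintegral_congr hinner).trans (by simp)

lemma cost_top_right (μ ν : Measure E) [IsProbabilityMeasure μ] [IsProbabilityMeasure ν]
    (h : ∫⁻ y, (‖y‖₊ : ℝ≥0∞) ^ 2 ∂ν = ∞) :
    ∫⁻ p, ((‖p.1 - p.2‖₊ : ℝ≥0∞)) ^ 2 ∂(μ.prod ν) = ∞ := by
  rw [lintegral_prod _ meas_c2.aemeasurable]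
  have hinner : ∀ x : E, ∫⁻ y, ((‖x - y‖₊ : ℝ≥0∞)) ^ 2 ∂ν = ∞ := by
    intro x
    by_contra hfin
    have hb : ∫⁻ y, ((‖y‖₊ : ℝ≥0∞)) ^ 2 ∂ν ≤
        ∫⁻ y, (2 * (‖y - x‖₊ : ℝ≥0∞) ^ 2 + 2 * (‖x‖₊ : ℝ≥0∞) ^ 2) ∂ν :=
      lintegral_mono fun y => key1 y x
    have hrev : ∀ y : E, ((‖y - x‖₊ : ℝ≥0∞)) ^ 2 = ((‖x - y‖₊ : ℝ≥0∞)) ^ 2 := by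
      intro y; rw [show y - x = -(x - y) by abel, nnnorm_neg]
    simp only [hrev] at hb
    rw [lintegral_add_right _ measurable_const, lintegral_const,
      lintegral_const_mul' _ _ (by norm_num)] at hb
    rw [h] at hb
    simp only [measure_univ, mul_one] at hb
    have : (2 : ℝ≥0∞) * ∫⁻ y, ((‖x - y‖₊ : ℝ≥0∞)) ^ 2 ∂ν + 2 * (‖x‖₊ : ℝ≥0∞) ^ 2 ≠ ∞ := by
      apply ENNReal.add_ne_top.2
      exact ⟨ENNReal.mul_ne_top (by norm_num) hfin,
        ENNReal.mul_ne_top (by norm_num) (ENNReal.pow_ne_top ENNReal.coe_ne_top)⟩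
    exact this (top_le_iff.mp hb)
  exact (lintegral_congr hinner).trans (by simp)

end Aux

section CaseB

variable {E : Type*} [NormedAddCommGroup E] [MeasurableSpace E] [BorelSpace E]
  [SecondCountableTopology E]

lemma caseB (μ ν : Measure E) [IsProbabilityMeasure μ] [IsProbabilityMeasure ν] (R : ℝ) :
    ∃ (γ : Measure (E × E)) (S : Set E), MeasurableSet S ∧
      γ.map Prod.fst = μ ∧ γ.map Prod.snd = ν ∧
      ∃ m : ℝ≥0∞, m ≠ ∞ ∧ m.toReal = (μ S).toReal - (ν S).toReal ∧
        ∫⁻ p, ((‖p.1 - p.2‖₊ : ℝ≥0∞)) ^ 2 ∂γ ≤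
          ENNReal.ofReal (4 * R ^ 2) * m
            + 2 * ∫⁻ x in {x | R < ‖x‖}, ((‖x‖₊ : ℝ≥0∞)) ^ 2 ∂μ
            + 2 * ∫⁻ y in {y | R < ‖y‖}, ((‖y‖₊ : ℝ≥0∞)) ^ 2 ∂ν := by
  obtain ⟨S, hS, hle1, hle2⟩ := hahn_decomposition (μ := μ) (ν := ν)
  set π : Measure E := ν.restrict S + μ.restrict Sᶜ with hπdef
  have hπμ : π ≤ μ := by
    rw [Measure.le_iff]
    intro t ht
    have h1 : ν (t ∩ S) ≤ μ (t ∩ S) := hle1 _ (ht.inter hS) inter_subset_right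
    calc π t = ν (t ∩ S) + μ (t ∩ Sᶜ) := by
          simp [hπdef, Measure.restrict_apply ht]
    _ ≤ μ (t ∩ S) + μ (t ∩ Sᶜ) := add_le_add_left h1 _
    _ = μ t := by
          rw [← Set.diff_eq]
          exact measure_inter_add_diff t hS
  have hπν : π ≤ ν := by
    rw [Measure.le_iff]
    intro t ht
    have h1 : μ (t ∩ Sᶜ) ≤ ν (t ∩ Sᶜ) := hle2 _ (ht.inter hS.compl) inter_subset_right
    calc π t = ν (t ∩ S) + μ (t ∩ Sᶜ) := by
          simp [hπdef, Measure.restrict_apply ht]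
    _ ≤ ν (t ∩ S) + ν (t ∩ Sᶜ) := add_le_add_right h1 _
    _ = ν t := by
          rw [← Set.diff_eq]
          exact measure_inter_add_diff t hS
  set μ' : Measure E := μ - π with hμ'def
  set ν' : Measure E := ν - π with hν'def
  set m : ℝ≥0∞ := μ' univ with hmdef
  have hμ'univ : μ' univ = 1 - π univ := by
    rw [hμ'def, Measure.sub_apply MeasurableSet.univ hπμ, measure_univ]
  have hν'univ : ν' univ = m := by
    rw [hν'def, Measure.sub_apply MeasurableSet.univ hπν, measure_univ, hmdef, hμ'univ]
  have hm_ne_top : m ≠ ∞ := (measure_ne_top μ' univ)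
  have hdiag : Measurable fun x : E => (x, x) := measurable_id.prodMk measurable_id
  set γ : Measure (E × E) := π.map (fun x => (x, x)) + m⁻¹ • (μ'.prod ν') with hγdef
  have hμ'add : μ' + π = μ := Measure.sub_add_cancel_of_le hπμ
  have hν'add : ν' + π = ν := Measure.sub_add_cancel_of_le hπν
  have hsmul_fst : m⁻¹ • (m • μ') = μ' := by
    by_cases hm0 : m = 0
    · have : μ' = 0 := Measure.measure_univ_eq_zero.mp hm0
      simp [this]
    · rw [smul_smul, ENNReal.inv_mul_cancel hm0 hm_ne_top, one_smul]
  have hsmul_snd : m⁻¹ • (m • ν') = ν' := by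
    by_cases hm0 : m = 0
    · have : ν' = 0 := Measure.measure_univ_eq_zero.mp (hν'univ.trans hm0)
      simp [this]
    · rw [smul_smul, ENNReal.inv_mul_cancel hm0 hm_ne_top, one_smul]
  have hfst : γ.map Prod.fst = μ := by
    rw [hγdef, Measure.map_add _ _ measurable_fst, Measure.map_smul,
      Measure.map_map measurable_fst hdiag, Measure.map_fst_prod, hν'univ]
    have : (Prod.fst ∘ fun x : E => (x, x)) = id := rfl
    rw [this, Measure.map_id, hsmul_fst, add_comm, hμ'add]
  have hsnd : γ.map Prod.snd = ν := by
    rw [hγdef, Measure.map_add _ _ measurable_snd, Measure.map_smul,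
      Measure.map_map measurable_snd hdiag, Measure.map_snd_prod]
    have : (Prod.snd ∘ fun x : E => (x, x)) = id := rfl
    rw [this, Measure.map_id, hsmul_snd, add_comm, hν'add]
  refine ⟨γ, S, hS, hfst, hsnd, m, hm_ne_top, ?_, ?_⟩
  · -- m.toReal = (μ S).toReal - (ν S).toReal
    have hπuniv : π univ = ν S + μ Sᶜ := by
      simp [hπdef, Measure.restrict_apply_univ]
    have hπle1 : π univ ≤ 1 := by
      have := Measure.le_iff'.mp hπμ univ
      simpa using this
    have ht1 : m.toReal = 1 - (π univ).toReal := by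
      rw [hmdef, hμ'univ, ENNReal.toReal_sub_of_le hπle1 ENNReal.one_ne_top]
      norm_num
    have ht2 : (π univ).toReal = (ν S).toReal + (μ Sᶜ).toReal := by
      rw [hπuniv, ENNReal.toReal_add (measure_ne_top _ _) (measure_ne_top _ _)]
    have ht3 : (μ Sᶜ).toReal = 1 - (μ S).toReal := by
      rw [prob_compl_eq_one_sub hS, ENNReal.toReal_sub_of_le prob_le_one ENNReal.one_ne_top]
      norm_num
    rw [ht1, ht2, ht3]
    ring
  · -- the lintegral bound
    have hSrm : MeasurableSet {x : E | R < ‖x‖} :=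
      (isOpen_lt continuous_const continuous_norm).measurableSet
    set Sr : Set E := {x : E | R < ‖x‖} with hSrdef
    set r2 : ℝ≥0∞ := ENNReal.ofReal (R ^ 2) with hr2def
    have hA : ∀ ρ ρ0 : Measure E, ρ ≤ ρ0 → ∫⁻ x, ((‖x‖₊ : ℝ≥0∞)) ^ 2 ∂ρ ≤
        (∫⁻ x in Sr, ((‖x‖₊ : ℝ≥0∞)) ^ 2 ∂ρ0) + r2 * ρ univ := by
      intro ρ ρ0 hρ
      rw [← lintegral_add_compl (fun x => ((‖x‖₊ : ℝ≥0∞)) ^ 2) hSrm (μ := ρ)]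
      gcongr
      · calc ∫⁻ x in Srᶜ, ((‖x‖₊ : ℝ≥0∞)) ^ 2 ∂ρ ≤ ∫⁻ _ in Srᶜ, r2 ∂ρ := by
              refine setLIntegral_mono measurable_const fun x hx => ?_
              have hnx : ‖x‖ ≤ R := not_lt.mp hx
              rw [sq_ofReal_norm, hr2def]
              exact ENNReal.ofReal_le_ofReal (by nlinarith [norm_nonneg x])
        _ = r2 * ρ Srᶜ := by rw [setLIntegral_const]
        _ ≤ r2 * ρ univ := mul_le_mul_right (measure_mono (subset_univ _)) _
    have hABμ : ∫⁻ x, ((‖x‖₊ : ℝ≥0∞)) ^ 2 ∂μ' ≤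
        (∫⁻ x in Sr, ((‖x‖₊ : ℝ≥0∞)) ^ 2 ∂μ) + r2 * m := by
      have := hA μ' μ Measure.sub_le
      rwa [← hmdef] at this
    have hABν : ∫⁻ y, ((‖y‖₊ : ℝ≥0∞)) ^ 2 ∂ν' ≤
        (∫⁻ y in Sr, ((‖y‖₊ : ℝ≥0∞)) ^ 2 ∂ν) + r2 * m := by
      have := hA ν' ν Measure.sub_le
      rwa [hν'univ] at this
    rw [hγdef, lintegral_add_measure, lintegral_map meas_c2 hdiag, lintegral_smul_measure]
    have h0 : ∫⁻ x, ((‖(x, x).1 - (x, x).2‖₊ : ℝ≥0∞)) ^ 2 ∂π = 0 := by simp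
    rw [h0, zero_add]
    by_cases hm0 : m = 0
    · have hz : μ' = 0 := Measure.measure_univ_eq_zero.mp hm0
      rw [hz, Measure.zero_prod]
      simp
    · have hfst_int : ∀ g : E → ℝ≥0∞, Measurable g →
          ∫⁻ p, g p.1 ∂(μ'.prod ν') = m * ∫⁻ x, g x ∂μ' := by
        intro g hg
        rw [← lintegral_map hg measurable_fst, Measure.map_fst_prod, hν'univ,
          lintegral_smul_measure, smul_eq_mul]
      have hsnd_int : ∀ g : E → ℝ≥0∞, Measurable g →
          ∫⁻ p, g p.2 ∂(μ'.prod ν') = m * ∫⁻ y, g y ∂ν' := by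
        intro g hg
        rw [← lintegral_map hg measurable_snd, Measure.map_snd_prod, ← hmdef,
          lintegral_smul_measure, smul_eq_mul]
      have hgm : Measurable fun x : E => ((‖x‖₊ : ℝ≥0∞)) ^ 2 :=
        (measurable_nnnorm.coe_nnreal_ennreal).pow_const 2
      have hP : ∫⁻ p, ((‖p.1 - p.2‖₊ : ℝ≥0∞)) ^ 2 ∂(μ'.prod ν') ≤
          m * (2 * (∫⁻ x, ((‖x‖₊ : ℝ≥0∞)) ^ 2 ∂μ') + 2 * ∫⁻ y, ((‖y‖₊ : ℝ≥0∞)) ^ 2 ∂ν') := by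
        calc ∫⁻ p, ((‖p.1 - p.2‖₊ : ℝ≥0∞)) ^ 2 ∂(μ'.prod ν')
            ≤ ∫⁻ p, (2 * ((‖p.1‖₊ : ℝ≥0∞)) ^ 2 + 2 * ((‖p.2‖₊ : ℝ≥0∞)) ^ 2) ∂(μ'.prod ν') :=
              lintegral_mono fun p => key2 p.1 p.2
        _ = (∫⁻ p, 2 * ((‖p.1‖₊ : ℝ≥0∞)) ^ 2 ∂(μ'.prod ν'))
              + ∫⁻ p, 2 * ((‖p.2‖₊ : ℝ≥0∞)) ^ 2 ∂(μ'.prod ν') := by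
            exact lintegral_add_left ((hgm.comp measurable_fst).const_mul 2) _
        _ = 2 * (m * ∫⁻ x, ((‖x‖₊ : ℝ≥0∞)) ^ 2 ∂μ') + 2 * (m * ∫⁻ y, ((‖y‖₊ : ℝ≥0∞)) ^ 2 ∂ν') := by
            rw [lintegral_const_mul' _ _ (by norm_num), lintegral_const_mul' _ _ (by norm_num),
              hfst_int _ hgm, hsnd_int _ hgm]
        _ = _ := by ring
      calc m⁻¹ * ∫⁻ p, ((‖p.1 - p.2‖₊ : ℝ≥0∞)) ^ 2 ∂(μ'.prod ν')
          ≤ m⁻¹ * (m * (2 * (∫⁻ x, ((‖x‖₊ : ℝ≥0∞)) ^ 2 ∂μ')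
              + 2 * ∫⁻ y, ((‖y‖₊ : ℝ≥0∞)) ^ 2 ∂ν')) := mul_le_mul_right hP _
      _ = 2 * (∫⁻ x, ((‖x‖₊ : ℝ≥0∞)) ^ 2 ∂μ') + 2 * ∫⁻ y, ((‖y‖₊ : ℝ≥0∞)) ^ 2 ∂ν' := by
            rw [← mul_assoc, ENNReal.inv_mul_cancel hm0 hm_ne_top, one_mul]
      _ ≤ 2 * ((∫⁻ x in Sr, ((‖x‖₊ : ℝ≥0∞)) ^ 2 ∂μ) + r2 * m)
            + 2 * ((∫⁻ y in Sr, ((‖y‖₊ : ℝ≥0∞)) ^ 2 ∂ν) + r2 * m) := by gcongr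
      _ = (4 * r2) * m + 2 * (∫⁻ x in Sr, ((‖x‖₊ : ℝ≥0∞)) ^ 2 ∂μ)
            + 2 * ∫⁻ y in Sr, ((‖y‖₊ : ℝ≥0∞)) ^ 2 ∂ν := by ring
      _ = ENNReal.ofReal (4 * R ^ 2) * m + 2 * (∫⁻ x in Sr, ((‖x‖₊ : ℝ≥0∞)) ^ 2 ∂μ)
            + 2 * ∫⁻ y in Sr, ((‖y‖₊ : ℝ≥0∞)) ^ 2 ∂ν := by
            rw [ENNReal.ofReal_mul (by norm_num : (0:ℝ) ≤ 4), hr2def]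
            norm_num

end CaseB

set_option maxHeartbeats 1000000 in
theorem stmt0 (d : ℕ) (μ ν : Measure (EuclideanSpace ℝ (Fin d)))
    [IsProbabilityMeasure μ] [IsProbabilityMeasure ν] (R : ℝ) (hR : 0 < R) :
    W2sq μ ν ≤ 4 * R ^ 2 * tvDist μ ν
      + 2 * ∫ x in {x : EuclideanSpace ℝ (Fin d) | R < ‖x‖}, ‖x‖ ^ 2 ∂μ
      + 2 * R ^ 2 * (μ {x | R < ‖x‖}).toReal
      + 2 * ∫ y in {y : EuclideanSpace ℝ (Fin d) | R < ‖y‖}, ‖y‖ ^ 2 ∂ν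
      + 2 * R ^ 2 * (ν {y | R < ‖y‖}).toReal := by
  set E := EuclideanSpace ℝ (Fin d)
  have hIμ : ∫ x in {x : E | R < ‖x‖}, ‖x‖ ^ 2 ∂μ
      = (∫⁻ x in {x : E | R < ‖x‖}, ((‖x‖₊ : ℝ≥0∞)) ^ 2 ∂μ).toReal := tail_real μ _
  have hIν : ∫ y in {y : E | R < ‖y‖}, ‖y‖ ^ 2 ∂ν
      = (∫⁻ y in {y : E | R < ‖y‖}, ((‖y‖₊ : ℝ≥0∞)) ^ 2 ∂ν).toReal := tail_real ν _
  have hIμ0 : (0:ℝ) ≤ ∫ x in {x : E | R < ‖x‖}, ‖x‖ ^ 2 ∂μ :=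
    integral_nonneg fun x => by positivity
  have hIν0 : (0:ℝ) ≤ ∫ y in {y : E | R < ‖y‖}, ‖y‖ ^ 2 ∂ν :=
    integral_nonneg fun y => by positivity
  have hPμ0 : (0:ℝ) ≤ (μ {x : E | R < ‖x‖}).toReal := ENNReal.toReal_nonneg
  have hPν0 : (0:ℝ) ≤ (ν {y : E | R < ‖y‖}).toReal := ENNReal.toReal_nonneg
  have htv0 : 0 ≤ tvDist μ ν := tv_nonneg μ ν
  by_cases hfin : (∫⁻ x, ((‖x‖₊ : ℝ≥0∞)) ^ 2 ∂μ ≠ ∞) ∧ (∫⁻ y, ((‖y‖₊ : ℝ≥0∞)) ^ 2 ∂ν ≠ ∞)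
  · obtain ⟨hfμ, hfν⟩ := hfin
    obtain ⟨γ, S, hS, h1, h2, m, hm_ne, hmtr, hL⟩ := caseB μ ν R
    set Tμ : ℝ≥0∞ := ∫⁻ x in {x : E | R < ‖x‖}, ((‖x‖₊ : ℝ≥0∞)) ^ 2 ∂μ with hTμdef
    set Tν : ℝ≥0∞ := ∫⁻ y in {y : E | R < ‖y‖}, ((‖y‖₊ : ℝ≥0∞)) ^ 2 ∂ν with hTνdef
    have hTμ_ne : Tμ ≠ ∞ :=
      ne_top_of_le_ne_top hfμ (setLIntegral_le_lintegral _ _)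
    have hTν_ne : Tν ≠ ∞ :=
      ne_top_of_le_ne_top hfν (setLIntegral_le_lintegral _ _)
    have hmul_ne : ENNReal.ofReal (4 * R ^ 2) * m ≠ ∞ :=
      ENNReal.mul_ne_top ENNReal.ofReal_ne_top hm_ne
    have h2Tμ_ne : (2:ℝ≥0∞) * Tμ ≠ ∞ := ENNReal.mul_ne_top (by norm_num) hTμ_ne
    have h2Tν_ne : (2:ℝ≥0∞) * Tν ≠ ∞ := ENNReal.mul_ne_top (by norm_num) hTν_ne
    have hB_ne : ENNReal.ofReal (4 * R ^ 2) * m + 2 * Tμ + 2 * Tν ≠ ∞ :=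
      ENNReal.add_ne_top.2 ⟨ENNReal.add_ne_top.2 ⟨hmul_ne, h2Tμ_ne⟩, h2Tν_ne⟩
    have hcost : ∫ p, ‖p.1 - p.2‖ ^ 2 ∂γ ≤
        4 * R ^ 2 * m.toReal + 2 * Tμ.toReal + 2 * Tν.toReal := by
      rw [cost_real γ]
      calc (∫⁻ p, ((‖p.1 - p.2‖₊ : ℝ≥0∞)) ^ 2 ∂γ).toReal
          ≤ (ENNReal.ofReal (4 * R ^ 2) * m + 2 * Tμ + 2 * Tν).toReal :=
            ENNReal.toReal_mono hB_ne hL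
      _ = 4 * R ^ 2 * m.toReal + 2 * Tμ.toReal + 2 * Tν.toReal := by
            rw [ENNReal.toReal_add (ENNReal.add_ne_top.2 ⟨hmul_ne, h2Tμ_ne⟩) h2Tν_ne,
              ENNReal.toReal_add hmul_ne h2Tμ_ne, ENNReal.toReal_mul, ENNReal.toReal_mul,
              ENNReal.toReal_mul, ENNReal.toReal_ofReal (by positivity)]
            norm_num
    have hmtv : m.toReal ≤ tvDist μ ν := by
      rw [hmtr]
      calc (μ S).toReal - (ν S).toReal ≤ |(μ S).toReal - (ν S).toReal| := le_abs_self _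
      _ ≤ tvDist μ ν := le_ciSup (tv_bddAbove μ ν) ⟨S, hS⟩
    refine W2sq_le_of_coupling μ ν γ h1 h2 ?_
    have hR2 : (0:ℝ) ≤ 4 * R ^ 2 := by positivity
    have hmul : 4 * R ^ 2 * m.toReal ≤ 4 * R ^ 2 * tvDist μ ν :=
      mul_le_mul_of_nonneg_left hmtv hR2
    rw [hIμ, hIν]
    nlinarith [hcost, hmul, hR, hPμ0, hPν0, sq_nonneg R]
  · rw [not_and_or] at hfin
    set γ : Measure (E × E) := μ.prod ν with hγdef
    have h1 : γ.map Prod.fst = μ := by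
      rw [hγdef, Measure.map_fst_prod]
      simp
    have h2 : γ.map Prod.snd = ν := by
      rw [hγdef, Measure.map_snd_prod]
      simp
    have hLtop : ∫⁻ p, ((‖p.1 - p.2‖₊ : ℝ≥0∞)) ^ 2 ∂γ = ∞ := by
      rcases hfin with h | h
      · exact cost_top_left μ ν (not_ne_iff.mp h)
      · exact cost_top_right μ ν (not_ne_iff.mp h)
    have hcost : ∫ p, ‖p.1 - p.2‖ ^ 2 ∂γ = 0 := by
      rw [cost_real γ, hLtop, ENNReal.toReal_top]
    refine W2sq_le_of_coupling μ ν γ h1 h2 ?_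
    rw [hcost]
    have hR2 : (0:ℝ) ≤ 4 * R ^ 2 := by positivity
    nlinarith [mul_nonneg hR2 htv0, sq_nonneg R]
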